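/- arXiv:1803.01732 — 3 statements merged into one kernel-verified Lean document; each statement's English description precedes it below -/
import Mathlib

section
/- For every x < 0, the function u(x,y) = x·y·(x²+y²)·arg(x + y·i), viewed as a function of (x,y) ∈ ℝ², is not differentiable at the point (x, 0). -/
open Filter Topology Complex

/-- For every `x < 0`, the function `u(x,y) = x·y·(x²+y²)·arg(x + y·i)` on `ℝ²`
is not differentiable at the point `(x, 0)`. -/
theorem not_differentiableAt_xy_sq_mul_arg {x : ℝ} (hx : x < 0) :
    ¬ DifferentiableAt ℝ
        (fun p : ℝ × ℝ =>
          p.1 * p.2 * (p.1 ^ 2 + p.2 ^ 2) *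
            Complex.arg ((p.1 : ℂ) + (p.2 : ℂ) * Complex.I))
        (x, 0) := by
  intro h
  set f : ℝ × ℝ → ℝ := fun p =>
    p.1 * p.2 * (p.1 ^ 2 + p.2 ^ 2) * Complex.arg ((p.1 : ℂ) + (p.2 : ℂ) * Complex.I) with hf
  set g : ℝ → ℝ := fun y => f (x, y) with hg
  have hcomp : DifferentiableAt ℝ (fun y : ℝ => (x, y)) 0 :=
    (differentiableAt_const x).prodMk differentiableAt_id
  have hgd : DifferentiableAt ℝ g 0 := h.comp 0 hcomp
  have hder : HasDerivAt g (deriv g 0) 0 := hgd.hasDerivAt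
  have hslope : Tendsto (slope g 0) (𝓝[≠] (0:ℝ)) (𝓝 (deriv g 0)) :=
    hasDerivAt_iff_tendsto_slope.1 hder
  have hg0 : g 0 = 0 := by simp [hg, hf]
  -- slope g 0 y = x * (x^2 + y^2) * arg (x + y i) for y ≠ 0
  have hslope_eq : ∀ y : ℝ, y ≠ 0 →
      slope g 0 y = x * (x ^ 2 + y ^ 2) * Complex.arg ((x : ℂ) + (y : ℂ) * Complex.I) := by
    intro y hy
    rw [slope_def_field, hg0]
    simp only [hg, hf]
    field_simp
    ring
  -- tendsto of the complex map
  have hmap : Tendsto (fun y : ℝ => (x : ℂ) + (y : ℂ) * Complex.I) (𝓝 0) (𝓝 (x : ℂ)) := by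
    have : Continuous (fun y : ℝ => (x : ℂ) + (y : ℂ) * Complex.I) := by continuity
    simpa using this.tendsto 0
  have hre : ((x : ℂ)).re < 0 := by simpa using hx
  have him : ((x : ℂ)).im = 0 := by simp
  -- right limit
  have hargR : Tendsto (fun y : ℝ => Complex.arg ((x : ℂ) + (y : ℂ) * Complex.I))
      (𝓝[>] (0:ℝ)) (𝓝 Real.pi) := by
    refine (Complex.tendsto_arg_nhdsWithin_im_nonneg_of_re_neg_of_im_zero hre him).comp ?_
    rw [tendsto_nhdsWithin_iff]
    refine ⟨hmap.mono_left nhdsWithin_le_nhds, ?_⟩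
    filter_upwards [self_mem_nhdsWithin] with y hy
    simp [le_of_lt (Set.mem_Ioi.mp hy)]
  have hargL : Tendsto (fun y : ℝ => Complex.arg ((x : ℂ) + (y : ℂ) * Complex.I))
      (𝓝[<] (0:ℝ)) (𝓝 (-Real.pi)) := by
    refine (Complex.tendsto_arg_nhdsWithin_im_neg_of_re_neg_of_im_zero hre him).comp ?_
    rw [tendsto_nhdsWithin_iff]
    refine ⟨hmap.mono_left nhdsWithin_le_nhds, ?_⟩
    filter_upwards [self_mem_nhdsWithin] with y hy
    simpa using hy
  have hpoly : Tendsto (fun y : ℝ => x * (x ^ 2 + y ^ 2)) (𝓝 (0:ℝ))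
      (𝓝 (x * (x ^ 2 + 0 ^ 2))) := by
    apply Continuous.tendsto; continuity
  have hR : Tendsto (slope g 0) (𝓝[>] (0:ℝ)) (𝓝 (x * (x ^ 2 + 0 ^ 2) * Real.pi)) := by
    refine Tendsto.congr' ?_ ((hpoly.mono_left nhdsWithin_le_nhds).mul hargR)
    filter_upwards [self_mem_nhdsWithin] with y hy
    exact (hslope_eq y (ne_of_gt hy)).symm
  have hL : Tendsto (slope g 0) (𝓝[<] (0:ℝ)) (𝓝 (x * (x ^ 2 + 0 ^ 2) * (-Real.pi))) := by
    refine Tendsto.congr' ?_ ((hpoly.mono_left nhdsWithin_le_nhds).mul hargL)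
    filter_upwards [self_mem_nhdsWithin] with y hy
    exact (hslope_eq y (ne_of_lt hy)).symm
  have hsubR : 𝓝[>] (0:ℝ) ≤ 𝓝[≠] (0:ℝ) :=
    nhdsWithin_mono 0 (fun y hy => ne_of_gt hy)
  have hsubL : 𝓝[<] (0:ℝ) ≤ 𝓝[≠] (0:ℝ) :=
    nhdsWithin_mono 0 (fun y hy => ne_of_lt hy)
  have h1 : deriv g 0 = x * (x ^ 2 + 0 ^ 2) * Real.pi :=
    tendsto_nhds_unique (hslope.mono_left hsubR) hR
  have h2 : deriv g 0 = x * (x ^ 2 + 0 ^ 2) * (-Real.pi) :=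
    tendsto_nhds_unique (hslope.mono_left hsubL) hL
  have hpi := Real.pi_pos
  have heq := h1.symm.trans h2
  have hx3 : x ^ 3 < 0 := Odd.pow_neg (by decide) hx
  nlinarith [heq, hpi, hx3, mul_neg_of_neg_of_pos hx3 hpi]
end

section
/- For every (x,y) ∈ ℝ² with y ≠ 0, the function u(x,y) = x·y·(x²+y²)·arg(x + y·i) satisfies the Laplacian identity ∂²u/∂x² + ∂²u/∂y² = 12·x·y·arg(x + y·i) + 2·(x² − y²), where the second partial derivatives are iterated one-dimensional derivatives (deriv applied twice in each variable). -/
open Real Complex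

lemma arg_add_mul_I_eq (x : ℝ) {y : ℝ} (hy : y ≠ 0) :
    Complex.arg ((x : ℂ) + (y : ℂ) * Complex.I) =
      (if 0 < y then π / 2 else -(π / 2)) - Real.arctan (x / y) := by
  set z : ℂ := (x : ℂ) + (y : ℂ) * Complex.I with hzdef
  have him : z.im = y := by simp [hzdef]
  have hre : z.re = x := by simp [hzdef]
  have hz : z ≠ 0 := fun h => hy (by rw [← him, h]; simp)
  have habs : ‖z‖ ≠ 0 := norm_ne_zero_iff.mpr hz
  have htan : Real.tan (π / 2 - z.arg) = x / y := by
    rw [Real.tan_pi_div_two_sub, Real.tan_eq_sin_div_cos, Complex.sin_arg,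
      Complex.cos_arg hz, him, hre, inv_div]
    field_simp
  rcases lt_or_gt_of_ne hy with hneg | hpos
  · have h1 : z.arg < 0 := Complex.arg_neg_iff.2 (him ▸ hneg)
    have h2 : -π < z.arg := Complex.neg_pi_lt_arg z
    have htan2 : Real.tan (-(π / 2) - z.arg) = x / y := by
      rw [show -(π / 2) - z.arg = (π / 2 - z.arg) - π by ring, Real.tan_sub_pi, htan]
    have := Real.arctan_tan (x := -(π / 2) - z.arg) (by linarith) (by linarith)
    rw [htan2] at this
    rw [if_neg (not_lt.2 hneg.le)]
    linarith
  · have h1 : 0 < z.arg := by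
      rcases (Complex.arg_nonneg_iff.2 (him ▸ hpos.le)).lt_or_eq with h | h
      · exact h
      · exact absurd (Complex.arg_eq_zero_iff.1 h.symm).2 (him ▸ hpos.ne')
    have h2 : z.arg < π := Complex.arg_lt_pi_iff.2 (Or.inr (him ▸ hpos.ne'))
    have := Real.arctan_tan (x := π / 2 - z.arg) (by linarith) (by linarith)
    rw [htan] at this
    rw [if_pos hpos]
    linarith

lemma hasDerivAt_arg_x {y : ℝ} (hy : y ≠ 0) (a : ℝ) :
    HasDerivAt (fun a : ℝ => Complex.arg ((a : ℂ) + (y : ℂ) * Complex.I))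
      (-y / (a ^ 2 + y ^ 2)) a := by
  have hk : (fun a : ℝ => Complex.arg ((a : ℂ) + (y : ℂ) * Complex.I)) =
      fun a : ℝ => (if 0 < y then π / 2 else -(π / 2)) - Real.arctan (a / y) :=
    funext fun a => arg_add_mul_I_eq a hy
  rw [hk]
  have h1 : HasDerivAt (fun a : ℝ => a / y) (1 / y) a := by
    simpa using (hasDerivAt_id a).div_const y
  have h2 := (Real.hasDerivAt_arctan (a / y)).comp a h1
  have h3 := (hasDerivAt_const a (if 0 < y then π / 2 else -(π / 2))).sub h2
  refine h3.congr_deriv ?_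
  have hpos : (0:ℝ) < a ^ 2 + y ^ 2 := by positivity
  field_simp
  ring

lemma hasDerivAt_arg_y (x : ℝ) {y : ℝ} (hy : y ≠ 0) :
    HasDerivAt (fun b : ℝ => Complex.arg ((x : ℂ) + (b : ℂ) * Complex.I))
      (x / (x ^ 2 + y ^ 2)) y := by
  have h1 : HasDerivAt (fun b : ℝ => x / b) (-x / y ^ 2) y := by
    simpa [div_eq_mul_inv, mul_neg, neg_div] using (hasDerivAt_inv hy).const_mul x
  have h2 := (Real.hasDerivAt_arctan (x / y)).comp y h1
  have h3 := (hasDerivAt_const y (if 0 < y then π / 2 else -(π / 2))).sub h2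
  have h4 : HasDerivAt (fun b : ℝ => Complex.arg ((x : ℂ) + (b : ℂ) * Complex.I))
      (0 - 1 / (1 + (x / y) ^ 2) * (-x / y ^ 2)) y := by
    apply h3.congr_of_eventuallyEq
    rcases lt_or_gt_of_ne hy with hneg | hpos
    · filter_upwards [eventually_lt_nhds hneg] with b hb
      rw [arg_add_mul_I_eq x hb.ne, if_neg (not_lt.2 hb.le), if_neg (not_lt.2 hneg.le)]; rfl
    · filter_upwards [eventually_gt_nhds hpos] with b hb
      rw [arg_add_mul_I_eq x hb.ne', if_pos hb, if_pos hpos]; rfl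
  convert h4 using 1
  have hpos : (0:ℝ) < x ^ 2 + y ^ 2 := by positivity
  field_simp
  ring

/-- For `y ≠ 0`, the function `u(x,y) = x·y·(x²+y²)·arg(x + y·i)` satisfies
`∂²u/∂x² + ∂²u/∂y² = 12·x·y·arg(x + y·i) + 2·(x² − y²)`, second partials taken as
iterated one-dimensional derivatives. -/
theorem laplacian_xy_sq_mul_arg {x y : ℝ} (hy : y ≠ 0) :
    deriv (deriv (fun a : ℝ =>
        a * y * (a ^ 2 + y ^ 2) * Complex.arg ((a : ℂ) + (y : ℂ) * Complex.I))) x +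
      deriv (deriv (fun b : ℝ =>
        x * b * (x ^ 2 + b ^ 2) * Complex.arg ((x : ℂ) + (b : ℂ) * Complex.I))) y =
    12 * x * y * Complex.arg ((x : ℂ) + (y : ℂ) * Complex.I) + 2 * (x ^ 2 - y ^ 2) := by
  have hpos : (0:ℝ) < x ^ 2 + y ^ 2 := by positivity
  set A : ℝ → ℝ := fun a => Complex.arg ((a : ℂ) + (y : ℂ) * Complex.I) with hA
  set B : ℝ → ℝ := fun b => Complex.arg ((x : ℂ) + (b : ℂ) * Complex.I) with hB
  -- first derivative in x, everywhere
  have hf : ∀ a : ℝ, HasDerivAt (fun a : ℝ => a * y * (a ^ 2 + y ^ 2) * A a)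
      ((3 * a ^ 2 * y + y ^ 3) * A a - a * y ^ 2) a := by
    intro a
    have hposa : (0:ℝ) < a ^ 2 + y ^ 2 := by positivity
    have h := (((hasDerivAt_id a).mul_const y).mul
        ((hasDerivAt_pow 2 a).add_const (y ^ 2))).mul (hasDerivAt_arg_x hy a)
    refine h.congr_deriv ?_
    simp only [hA, id, Pi.mul_apply]
    field_simp
    ring
  have hdf : deriv (fun a : ℝ => a * y * (a ^ 2 + y ^ 2) * A a) =
      fun a => (3 * a ^ 2 * y + y ^ 3) * A a - a * y ^ 2 :=
    funext fun a => (hf a).deriv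
  -- second derivative in x
  have hf2 : HasDerivAt (fun a : ℝ => (3 * a ^ 2 * y + y ^ 3) * A a - a * y ^ 2)
      (6 * x * y * A x + (3 * x ^ 2 * y + y ^ 3) * (-y / (x ^ 2 + y ^ 2)) - y ^ 2) x := by
    have h1 : HasDerivAt (fun a : ℝ => 3 * a ^ 2 * y + y ^ 3) (6 * x * y) x := by
      have := (((hasDerivAt_pow 2 x).const_mul (3:ℝ)).mul_const y).add_const (y ^ 3)
      refine this.congr_deriv ?_
      push_cast; ring
    have := (h1.mul (hasDerivAt_arg_x hy x)).sub ((hasDerivAt_id x).mul_const (y ^ 2))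
    refine this.congr_deriv ?_
    ring
  -- first derivative in y, away from 0
  have hg : ∀ b : ℝ, b ≠ 0 → HasDerivAt (fun b : ℝ => x * b * (x ^ 2 + b ^ 2) * B b)
      ((3 * x * b ^ 2 + x ^ 3) * B b + x ^ 2 * b) b := by
    intro b hb
    have hposb : (0:ℝ) < x ^ 2 + b ^ 2 := by positivity
    have h := (((hasDerivAt_id b).const_mul x).mul
        (((hasDerivAt_pow 2 b).const_add (x ^ 2)))).mul (hasDerivAt_arg_y x hb)
    refine h.congr_deriv ?_
    simp only [hB, id, Pi.mul_apply]
    field_simp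
    ring
  have hdg : deriv (fun b : ℝ => x * b * (x ^ 2 + b ^ 2) * B b) =ᶠ[nhds y]
      fun b => (3 * x * b ^ 2 + x ^ 3) * B b + x ^ 2 * b := by
    filter_upwards [eventually_ne_nhds hy] with b hb
    exact (hg b hb).deriv
  have hg2 : HasDerivAt (fun b : ℝ => (3 * x * b ^ 2 + x ^ 3) * B b + x ^ 2 * b)
      (6 * x * y * B y + (3 * x * y ^ 2 + x ^ 3) * (x / (x ^ 2 + y ^ 2)) + x ^ 2) y := by
    have h1 : HasDerivAt (fun b : ℝ => 3 * x * b ^ 2 + x ^ 3) (6 * x * y) y := by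
      have := (((hasDerivAt_pow 2 y).const_mul (3 * x))).add_const (x ^ 3)
      refine this.congr_deriv ?_
      push_cast; ring
    have := (h1.mul (hasDerivAt_arg_y x hy)).add ((hasDerivAt_id y).const_mul (x ^ 2))
    refine this.congr_deriv ?_
    ring
  rw [hdf, hf2.deriv, hdg.deriv_eq, hg2.deriv]
  have hAB : A x = B y := rfl
  have : Complex.arg ((x : ℂ) + (y : ℂ) * Complex.I) = A x := rfl
  rw [this, ← hAB]
  field_simp
  ring
end

section
/- Define h₁(x,y) = (1/10)·(−x − 1/2)·(8·x·y·(x²+y²)·arg(x + y·i) + x³) and h₂(x,z) = (1/10)·(−x − 1/2)·x³ − (4/5)·π·(−x − 1/2)·x³·|z|. Fix x < 0. Then: (i) the map y ↦ h₁(x,y) has right derivative at 0 equal to (4π/5)·(−x − 1/2)·x³ and left derivative at 0 equal to −(4π/5)·(−x − 1/2)·x³; (ii) the map z ↦ h₂(x,z) has right derivative at 0 equal to −(4π/5)·(−x − 1/2)·x³ and left derivative at 0 equal to (4π/5)·(−x − 1/2)·x³; and consequently (iii) the sum of the two jumps of normal derivatives, [(right − left derivative of h₁ in y at 0)] + [(right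 − left derivative of h₂ in z at 0)], equals 0. -/
open Real

/-- The exact hydraulic head on fracture `Ω₁`. -/
noncomputable def h₁ (x y : ℝ) : ℝ :=
  (1 / 10) * (-x - 1 / 2) *
    (8 * x * y * (x ^ 2 + y ^ 2) * Complex.arg ((x : ℂ) + (y : ℂ) * Complex.I) + x ^ 3)

/-- The exact hydraulic head on fracture `Ω₂`. -/
noncomputable def h₂ (x z : ℝ) : ℝ :=
  (1 / 10) * (-x - 1 / 2) * x ^ 3 - (4 / 5) * π * (-x - 1 / 2) * x ^ 3 * |z|

lemma h₁_deriv (x : ℝ) (s : Set ℝ) (L : ℝ)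
    (harg : Filter.Tendsto (fun y : ℝ => Complex.arg ((x : ℂ) + (y : ℂ) * Complex.I))
      (nhdsWithin 0 (s \ {0})) (nhds L)) :
    HasDerivWithinAt (fun y => h₁ x y)
      ((1 / 10) * (-x - 1 / 2) * (8 * x * x ^ 2) * L) s 0 := by
  rw [hasDerivWithinAt_iff_tendsto_slope]
  have hcont : Filter.Tendsto (fun y : ℝ => (1 / 10) * (-x - 1 / 2) * (8 * x * (x ^ 2 + y ^ 2)))
      (nhdsWithin 0 (s \ {0})) (nhds ((1 / 10) * (-x - 1 / 2) * (8 * x * (x ^ 2 + 0 ^ 2)))) :=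
    Filter.Tendsto.mono_left (Continuous.tendsto (by continuity) 0) nhdsWithin_le_nhds
  have hcont' : Filter.Tendsto (fun y : ℝ => (1 / 10) * (-x - 1 / 2) * (8 * x * (x ^ 2 + y ^ 2)))
      (nhdsWithin 0 (s \ {0})) (nhds ((1 / 10) * (-x - 1 / 2) * (8 * x * x ^ 2))) := by
    simpa using hcont
  refine (hcont'.mul harg).congr' ?_
  filter_upwards [self_mem_nhdsWithin] with y hy
  have hy0 : y ≠ (0:ℝ) := hy.2
  simp only [slope, h₁, vsub_eq_sub, smul_eq_mul]
  field_simp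
  ring

/-- For `x < 0`: (i) `y ↦ h₁(x,y)` has right derivative `(4π/5)·(−x−1/2)·x³` and left
derivative `−(4π/5)·(−x−1/2)·x³` at `0`; (ii) `z ↦ h₂(x,z)` has right derivative
`−(4π/5)·(−x−1/2)·x³` and left derivative `(4π/5)·(−x−1/2)·x³` at `0`; (iii) the sum of the
two jumps of normal derivatives vanishes. -/
theorem flux_balance_h₁_h₂ {x : ℝ} (hx : x < 0) :
    HasDerivWithinAt (fun y => h₁ x y) ((4 * π / 5) * (-x - 1 / 2) * x ^ 3) (Set.Ici 0) 0 ∧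
    HasDerivWithinAt (fun y => h₁ x y) (-((4 * π / 5) * (-x - 1 / 2) * x ^ 3)) (Set.Iic 0) 0 ∧
    HasDerivWithinAt (fun z => h₂ x z) (-((4 * π / 5) * (-x - 1 / 2) * x ^ 3)) (Set.Ici 0) 0 ∧
    HasDerivWithinAt (fun z => h₂ x z) ((4 * π / 5) * (-x - 1 / 2) * x ^ 3) (Set.Iic 0) 0 ∧
    (derivWithin (fun y => h₁ x y) (Set.Ici 0) 0 - derivWithin (fun y => h₁ x y) (Set.Iic 0) 0) +
      (derivWithin (fun z => h₂ x z) (Set.Ici 0) 0 -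
        derivWithin (fun z => h₂ x z) (Set.Iic 0) 0) = 0 := by
  have hre : ((x : ℂ) + (0 : ℂ) * Complex.I).re < 0 := by simpa using hx
  have him : ((x : ℂ) + (0 : ℂ) * Complex.I).im = 0 := by simp
  have hmapc : ∀ s : Set ℝ, Filter.Tendsto (fun y : ℝ => (x : ℂ) + (y : ℂ) * Complex.I)
      (nhdsWithin 0 s) (nhds ((x : ℂ) + (0 : ℂ) * Complex.I)) := fun s =>
    Filter.Tendsto.mono_left (Continuous.tendsto (by continuity) 0) nhdsWithin_le_nhds
  have hargR : Filter.Tendsto (fun y : ℝ => Complex.arg ((x : ℂ) + (y : ℂ) * Complex.I))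
      (nhdsWithin 0 (Set.Ici 0 \ {0})) (nhds π) := by
    refine (Complex.tendsto_arg_nhdsWithin_im_nonneg_of_re_neg_of_im_zero hre him).comp
      (tendsto_nhdsWithin_of_tendsto_nhds_of_eventually_within _ (hmapc _) ?_)
    filter_upwards [self_mem_nhdsWithin] with y hy
    simp only [Set.mem_setOf_eq, Complex.add_im, Complex.ofReal_im, Complex.mul_im,
      Complex.I_im, Complex.I_re, Complex.ofReal_re, mul_one, mul_zero, add_zero, zero_add]
    exact hy.1
  have hargL : Filter.Tendsto (fun y : ℝ => Complex.arg ((x : ℂ) + (y : ℂ) * Complex.I))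
      (nhdsWithin 0 (Set.Iic 0 \ {0})) (nhds (-π)) := by
    refine (Complex.tendsto_arg_nhdsWithin_im_neg_of_re_neg_of_im_zero hre him).comp
      (tendsto_nhdsWithin_of_tendsto_nhds_of_eventually_within _ (hmapc _) ?_)
    filter_upwards [self_mem_nhdsWithin] with y hy
    simp only [Set.mem_setOf_eq, Complex.add_im, Complex.ofReal_im, Complex.mul_im,
      Complex.I_im, Complex.I_re, Complex.ofReal_re, mul_one, mul_zero, add_zero, zero_add]
    exact lt_of_le_of_ne hy.1 hy.2
  have h1R : HasDerivWithinAt (fun y => h₁ x y) ((4 * π / 5) * (-x - 1 / 2) * x ^ 3)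
      (Set.Ici 0) 0 := by
    have := h₁_deriv x (Set.Ici 0) π hargR
    convert this using 1; ring
  have h1L : HasDerivWithinAt (fun y => h₁ x y) (-((4 * π / 5) * (-x - 1 / 2) * x ^ 3))
      (Set.Iic 0) 0 := by
    have := h₁_deriv x (Set.Iic 0) (-π) hargL
    convert this using 1; ring
  set C := (4 / 5) * π * (-x - 1 / 2) * x ^ 3 with hC
  have h2base : ∀ (c : ℝ), HasDerivWithinAt
      (fun z : ℝ => (1 / 10) * (-x - 1 / 2) * x ^ 3 - C * (c * z)) (-(C * c)) (Set.Ici 0) 0 ∧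
      HasDerivWithinAt
      (fun z : ℝ => (1 / 10) * (-x - 1 / 2) * x ^ 3 - C * (c * z)) (-(C * c)) (Set.Iic 0) 0 := by
    intro c
    constructor <;>
    · have : HasDerivAt (fun z : ℝ => (1 / 10) * (-x - 1 / 2) * x ^ 3 - C * (c * z))
          (-(C * c)) 0 := by
        simpa using ((hasDerivAt_id (0:ℝ)).const_mul c |>.const_mul C).const_sub
          ((1 / 10) * (-x - 1 / 2) * x ^ 3)
      exact this.hasDerivWithinAt
  have h2R : HasDerivWithinAt (fun z => h₂ x z) (-((4 * π / 5) * (-x - 1 / 2) * x ^ 3))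
      (Set.Ici 0) 0 := by
    have h := (h2base 1).1
    have heq : ∀ z ∈ Set.Ici (0:ℝ), h₂ x z =
        (1 / 10) * (-x - 1 / 2) * x ^ 3 - C * (1 * z) := by
      intro z hz
      simp only [h₂, hC, abs_of_nonneg (show (0:ℝ) ≤ z from hz)]
      ring
    have := h.congr heq (heq 0 (by simp))
    exact this.congr_deriv (by rw [hC]; ring)
  have h2L : HasDerivWithinAt (fun z => h₂ x z) ((4 * π / 5) * (-x - 1 / 2) * x ^ 3)
      (Set.Iic 0) 0 := by
    have h := (h2base (-1)).2
    have heq : ∀ z ∈ Set.Iic (0:ℝ), h₂ x z =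
        (1 / 10) * (-x - 1 / 2) * x ^ 3 - C * ((-1) * z) := by
      intro z hz
      simp only [h₂, hC, abs_of_nonpos (show z ≤ (0:ℝ) from hz)]
      ring
    have := h.congr heq (heq 0 (by simp))
    exact this.congr_deriv (by rw [hC]; ring)
  refine ⟨h1R, h1L, h2R, h2L, ?_⟩
  rw [h1R.derivWithin (uniqueDiffOn_Ici 0 0 Set.self_mem_Ici), h1L.derivWithin (uniqueDiffOn_Iic 0 0 Set.self_mem_Iic),
    h2R.derivWithin (uniqueDiffOn_Ici 0 0 Set.self_mem_Ici), h2L.derivWithin (uniqueDiffOn_Iic 0 0 Set.self_mem_Iic)]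
  ring
end
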